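/- Let $a < b$ and $d \ge 1$, and let $\mathcal{D} \subseteq C^d([a,b];\mathbb{R}^n)$ be the set of functions $u$ satisfying $\sum_{k=0}^{d-1}[B_{j,k} u^{(k)}(a) + C_{j,k} u^{(k)}(b)] = 0$ for $j = 0, \dots, d-1$, for given matrices $B_{j,k}, C_{j,k} \in \mathbb{R}^{n\times n}$. Suppose $u \in \mathcal{D}$ and let $H_a, H_b \in \mathbb{R}^{nd \times nd}$ be the block matrices with $(j,k)$ blocks $B_{j,k}$ and $C_{j,k}$, and assume $H_a + H_b Q(b-a)$ is invertible, where $Q(z)$ is the block upper-triangular matrix with $(i,j)$ block $\frac{z^{j-i}}{(j-i)!} I_n$ for $j \ge i$. Then the vector of boundary values $(u(a), u'(a), \dots, u^{(d-1)}(a))$ satisfies $(u(a), \dots, u^{(d-1)}(a)) = -\int_a^b (H_a + H_b Q(b-a))^{-1} H_b\, \mathbf{e}_d(b - \theta)\, u^{(d)}(\theta)\, d\theta$, where $\mathbf{e}_d(z) = (z^{d-1}/(d-1)!, \dots, z, 1)^T \otimes I_n$. -/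

import Mathlib

open MeasureTheory intervalIntegral Matrix

private lemma iter_iter (f : ℝ → ℝ) (m : ℕ) :
    ∀ j : ℕ, iteratedDeriv j (iteratedDeriv m f) = iteratedDeriv (j + m) f := by
  intro j
  induction j with
  | zero => simp
  | succ j ih => rw [iteratedDeriv_succ, ih, ← iteratedDeriv_succ]; ring_nf

private lemma contDiff_iter (r : ℕ) : ∀ (m : ℕ) (f : ℝ → ℝ),
    ContDiff ℝ ((m + r : ℕ)) f → ContDiff ℝ (r : ℕ) (iteratedDeriv m f) := by
  intro m
  induction m with
  | zero => intro f hf; simpa using hf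
  | succ m ih =>
      intro f hf
      rw [iteratedDeriv_succ']
      apply ih
      have : ContDiff ℝ ((m + r : ℕ) + 1) f := by
        convert hf using 2
        push_cast; ring
      exact (contDiff_succ_iff_deriv.1 this).2.2

private lemma my_taylor : ∀ (N : ℕ) (f : ℝ → ℝ), ContDiff ℝ ((N + 1 : ℕ)) f → ∀ (a b : ℝ),
    f b = (∑ j ∈ Finset.range (N + 1),
        (b - a) ^ j / (Nat.factorial j : ℝ) * iteratedDeriv j f a)
      + ∫ θ in a..b, (b - θ) ^ N / (Nat.factorial N : ℝ) * iteratedDeriv (N + 1) f θ := by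
  intro N
  induction N with
  | zero =>
      intro f hf a b
      have hder : ∀ x ∈ Set.uIcc a b, DifferentiableAt ℝ f x :=
        fun x _ => (hf.differentiable (by norm_cast)).differentiableAt
      have hcont : Continuous (deriv f) := by
        have := hf.continuous_iteratedDeriv 1 (by norm_cast)
        simpa [iteratedDeriv_one] using this
      have := integral_deriv_eq_sub hder (hcont.intervalIntegrable _ _)
      simp only [zero_add, Finset.range_one, Finset.sum_singleton, pow_zero, Nat.factorial_zero,
        Nat.cast_one, div_one, one_mul, iteratedDeriv_zero, iteratedDeriv_one]
      rw [this]; ring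
  | succ N ih =>
      intro f hf a b
      have hf' : ContDiff ℝ ((N + 1 : ℕ)) f := hf.of_le (by norm_cast; omega)
      have key := ih f hf' a b
      -- integration by parts on the remainder
      set g := iteratedDeriv (N + 1) f with hg
      have hgdiff : Differentiable ℝ g :=
        hf.differentiable_iteratedDeriv (N + 1) (by norm_cast; omega)
      have hgder : ∀ x ∈ Set.uIcc a b, HasDerivAt g (iteratedDeriv (N + 2) f x) x := by
        intro x _
        have := (hgdiff x).hasDerivAt
        rwa [show deriv g x = iteratedDeriv (N + 2) f x by
          rw [hg, ← iteratedDeriv_succ]] at this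
      have hvder : ∀ x ∈ Set.uIcc a b, HasDerivAt
          (fun t => -((b - t) ^ (N + 1) / (Nat.factorial (N + 1) : ℝ)))
          ((b - x) ^ N / (Nat.factorial N : ℝ)) x := by
        intro x _
        have h1 : HasDerivAt (fun t : ℝ => b - t) (-1) x := by
          simpa using (hasDerivAt_id x).const_sub b
        have h2 := (h1.pow (N + 1)).div_const (Nat.factorial (N + 1) : ℝ)
        have h3 := h2.neg
        refine h3.congr_deriv ?_
        have hNf : ((N + 1).factorial : ℝ) = (N + 1) * (N.factorial : ℝ) := by
          rw [Nat.factorial_succ]; push_cast; ring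
        rw [hNf, Nat.add_sub_cancel]; push_cast; field_simp
      have hgc : Continuous (iteratedDeriv (N + 2) f) :=
        hf.continuous_iteratedDeriv (N + 2) (by norm_cast)
      have hvc : Continuous (fun x : ℝ => (b - x) ^ N / (Nat.factorial N : ℝ)) := by
        continuity
      have hparts := intervalIntegral.integral_mul_deriv_eq_deriv_mul hgder hvder
        (hgc.intervalIntegrable _ _) (hvc.intervalIntegrable _ _)
      have hparts2 : (∫ θ in a..b, (b - θ) ^ N / (Nat.factorial N : ℝ) * g θ)
          = (b - a) ^ (N + 1) / (Nat.factorial (N + 1) : ℝ) * iteratedDeriv (N + 1) f a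
            + ∫ θ in a..b, (b - θ) ^ (N + 1) / (Nat.factorial (N + 1) : ℝ)
                * iteratedDeriv (N + 1 + 1) f θ := by
        have e1 : (∫ θ in a..b, (b - θ) ^ N / (Nat.factorial N : ℝ) * g θ)
            = ∫ x in a..b, g x * ((b - x) ^ N / (Nat.factorial N : ℝ)) := by
          congr 1; funext x; ring
        have e2 : (∫ x in a..b, iteratedDeriv (N + 2) f x *
              -((b - x) ^ (N + 1) / (Nat.factorial (N + 1) : ℝ)))
            = -∫ θ in a..b, (b - θ) ^ (N + 1) / (Nat.factorial (N + 1) : ℝ)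
                * iteratedDeriv (N + 1 + 1) f θ := by
          rw [← intervalIntegral.integral_neg]
          congr 1; funext x; ring_nf
        rw [e1, hparts, e2, hg]
        simp only [sub_self, zero_pow (Nat.succ_ne_zero N), zero_div, mul_zero, neg_zero,
          mul_neg, zero_mul]
        ring
      rw [key, hparts2]
      conv_rhs => rw [Finset.sum_range_succ]
      ring

private lemma coord_iter (n : ℕ) (u : ℝ → Fin n → ℝ) {d : ℕ} (hu : ContDiff ℝ (d : ℕ) u)
    (k : ℕ) (hk : k ≤ d) (i : Fin n) (x : ℝ) :
    iteratedDeriv k (fun t => u t i) x = iteratedDeriv k u x i := by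
  have hL := (ContinuousLinearMap.proj (R := ℝ) (φ := fun _ : Fin n => ℝ) i
    ).iteratedFDeriv_comp_left (hu.contDiffAt (x := x)) (i := k) (by exact_mod_cast hk)
  have : (fun t => u t i) = (ContinuousLinearMap.proj (R := ℝ) (φ := fun _ : Fin n => ℝ) i) ∘ u := rfl
  rw [this, iteratedDeriv_eq_iteratedFDeriv, iteratedDeriv_eq_iteratedFDeriv, hL]
  rfl

theorem stmt17 (n d : ℕ) (hd : 1 ≤ d) (a b : ℝ) (hab : a < b)
    (B C : Fin d → Fin d → Matrix (Fin n) (Fin n) ℝ)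
    (u : ℝ → Fin n → ℝ) (hu : ContDiff ℝ d u)
    (hbc : ∀ j : Fin d,
      ∑ k : Fin d, ((B j k).mulVec (iteratedDeriv (k : ℕ) u a) +
        (C j k).mulVec (iteratedDeriv (k : ℕ) u b)) = 0)
    (Ha Hb Q : Matrix (Fin d × Fin n) (Fin d × Fin n) ℝ)
    (hHa : ∀ p q : Fin d × Fin n, Ha p q = B p.1 q.1 p.2 q.2)
    (hHb : ∀ p q : Fin d × Fin n, Hb p q = C p.1 q.1 p.2 q.2)
    (hQ : ∀ p q : Fin d × Fin n, Q p q =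
      if (p.1 : ℕ) ≤ (q.1 : ℕ) ∧ p.2 = q.2 then
        (b - a) ^ ((q.1 : ℕ) - (p.1 : ℕ)) / (Nat.factorial ((q.1 : ℕ) - (p.1 : ℕ)) : ℝ)
      else 0)
    (hinv : IsUnit (Ha + Hb * Q).det) :
    ∀ (k : Fin d) (i : Fin n),
      iteratedDeriv (k : ℕ) u a i =
        -∫ θ in a..b, ∑ p : Fin d × Fin n,
          ((Ha + Hb * Q)⁻¹ * Hb) (k, i) p *
            ((b - θ) ^ (d - 1 - (p.1 : ℕ)) / (Nat.factorial (d - 1 - (p.1 : ℕ)) : ℝ) *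
              iteratedDeriv d u θ p.2) := by
  intro k i
  set A := Ha + Hb * Q with hAdef
  set Va : Fin d × Fin n → ℝ := fun p => iteratedDeriv (p.1 : ℕ) u a p.2 with hVa
  set Vb : Fin d × Fin n → ℝ := fun p => iteratedDeriv (p.1 : ℕ) u b p.2 with hVb
  set R : Fin d × Fin n → ℝ := fun p => ∫ θ in a..b,
      (b - θ) ^ (d - 1 - (p.1 : ℕ)) / ((d - 1 - (p.1 : ℕ)).factorial : ℝ)
        * iteratedDeriv d u θ p.2 with hR
  -- coordinate functions are ContDiff
  have hui : ∀ l : Fin n, ContDiff ℝ (d : ℕ) (fun t => u t l) := fun l =>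
    (ContinuousLinearMap.proj (R := ℝ) (φ := fun _ : Fin n => ℝ) l).contDiff.comp hu
  have hcoord : ∀ (l : Fin n) (m : ℕ), m ≤ d → ∀ x : ℝ,
      iteratedDeriv m (fun t => u t l) x = iteratedDeriv m u x l :=
    fun l m hm x => coord_iter n u hu m hm l x
  -- Step 1: Taylor
  have step1 : ∀ p : Fin d × Fin n, Vb p = Q.mulVec Va p + R p := by
    rintro ⟨m, l⟩
    have hmlt : (m : ℕ) < d := m.isLt
    set N : ℕ := d - 1 - (m : ℕ) with hN
    have hNd : (m : ℕ) + (N + 1) = d := by omega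
    have hg : ContDiff ℝ ((N + 1 : ℕ)) (iteratedDeriv (m : ℕ) (fun t => u t l)) := by
      apply contDiff_iter
      rw [hNd]; exact hui l
    have htay := my_taylor N _ hg a b
    rw [iter_iter] at htay
    simp only [iter_iter] at htay
    have he : ∀ j : ℕ, j + (m : ℕ) ≤ d → iteratedDeriv (j + (m : ℕ)) (fun t => u t l)
        = fun x => iteratedDeriv (j + (m : ℕ)) u x l := by
      intro j hj; funext x; exact hcoord l _ hj x
    -- identify the Q-row sum
    have hQsum : Q.mulVec Va (m, l) = ∑ j ∈ Finset.range (N + 1),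
        (b - a) ^ j / (Nat.factorial j : ℝ) * iteratedDeriv (j + (m : ℕ)) u a l := by
      rw [Matrix.mulVec, dotProduct, Fintype.sum_prod_type]
      have hinner : ∀ j : Fin d, (∑ l' : Fin n, Q (m, l) (j, l') * Va (j, l'))
          = if (m : ℕ) ≤ (j : ℕ) then
              (b - a) ^ ((j : ℕ) - (m : ℕ)) / (Nat.factorial ((j : ℕ) - (m : ℕ)) : ℝ)
              * iteratedDeriv (j : ℕ) u a l else 0 := by
        intro j
        simp only [hQ, hVa]
        rw [Finset.sum_eq_single l]
        · by_cases h : (m : ℕ) ≤ (j : ℕ) <;> simp [h]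
        · intro l' _ hne
          simp [hne.symm]
        · simp
      rw [Finset.sum_congr rfl (fun j _ => hinner j)]
      rw [Fin.sum_univ_eq_sum_range (fun j => if (m : ℕ) ≤ j then
        (b - a) ^ (j - (m : ℕ)) / (Nat.factorial (j - (m : ℕ)) : ℝ)
          * iteratedDeriv j u a l else 0) d]
      rw [← Finset.sum_filter]
      have hfil : (Finset.range d).filter (fun j => (m : ℕ) ≤ j) = Finset.Ico (m : ℕ) d := by
        ext x; simp [Finset.mem_filter, Finset.mem_Ico, Finset.mem_range, and_comm]
      rw [hfil, Finset.sum_Ico_eq_sum_range]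
      have hdm : d - (m : ℕ) = N + 1 := by omega
      rw [hdm]
      apply Finset.sum_congr rfl
      intro j _
      have : (m : ℕ) + j - (m : ℕ) = j := by omega
      rw [this, Nat.add_comm (m : ℕ) j]
    have hgb : iteratedDeriv (m : ℕ) (fun t => u t l) b = Vb (m, l) :=
      hcoord l (m : ℕ) (le_of_lt hmlt) b
    have hNm : N + 1 + (m : ℕ) = d := by omega
    rw [hgb] at htay
    rw [htay, hQsum, hR]
    congr 1
    · apply Finset.sum_congr rfl
      intro j hj
      have hjle : j + (m : ℕ) ≤ d := by
        simp only [Finset.mem_range] at hj; omega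
      rw [he j hjle]
    · simp only
      congr 1
      funext θ
      have : iteratedDeriv (N + 1 + (m : ℕ)) (fun t => u t l) θ
          = iteratedDeriv (N + 1 + (m : ℕ)) u θ l := hcoord l _ (le_of_eq hNm) θ
      rw [this, hNm]
  -- Step 2: boundary conditions in block form
  have step2 : ∀ p : Fin d × Fin n, Ha.mulVec Va p + Hb.mulVec Vb p = 0 := by
    rintro ⟨j, l⟩
    have := congrFun (hbc j) l
    simp only [Finset.sum_apply, Pi.add_apply, Pi.zero_apply] at this
    rw [Matrix.mulVec, Matrix.mulVec, dotProduct, dotProduct,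
      Fintype.sum_prod_type, Fintype.sum_prod_type]
    simp only [hHa, hHb, hVa, hVb]
    rw [← this]
    rw [← Finset.sum_add_distrib]
    apply Finset.sum_congr rfl
    intro x _
    simp [Matrix.mulVec, dotProduct]
  -- Step 3: solve for Va
  have step3 : Va = fun p => -(((A⁻¹ * Hb).mulVec R) p) := by
    have hAV : A.mulVec Va = fun p => -(Hb.mulVec R p) := by
      funext p
      rw [hAdef, Matrix.add_mulVec, ← Matrix.mulVec_mulVec]
      have hQV : Q.mulVec Va = fun q => Vb q - R q := by
        funext q; rw [step1 q]; ring
      rw [hQV]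
      have : Hb.mulVec (fun q => Vb q - R q) = fun q => Hb.mulVec Vb q - Hb.mulVec R q := by
        funext q
        simp only [Matrix.mulVec, dotProduct, mul_sub, Finset.sum_sub_distrib]
      rw [this]
      have := step2 p
      simp only [Pi.add_apply] at this ⊢
      linarith
    have h1 : A⁻¹.mulVec (A.mulVec Va) = Va := by
      rw [Matrix.mulVec_mulVec, Matrix.nonsing_inv_mul A hinv, Matrix.one_mulVec]
    rw [← h1, hAV]
    funext p
    rw [show (fun q => -(Hb.mulVec R q)) = -(Hb.mulVec R) from rfl,
      Matrix.mulVec_neg, ← Matrix.mulVec_mulVec]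
    simp
  -- Step 4: conclude
  have hVak := congrFun step3 (k, i)
  rw [show iteratedDeriv (k : ℕ) u a i = Va (k, i) from rfl, hVak]
  congr 1
  rw [Matrix.mulVec, dotProduct]
  have hcint : ∀ p : Fin d × Fin n, IntervalIntegrable (fun θ =>
      ((A⁻¹ * Hb) (k, i) p * ((b - θ) ^ (d - 1 - (p.1 : ℕ))
        / (Nat.factorial (d - 1 - (p.1 : ℕ)) : ℝ) * iteratedDeriv d u θ p.2)))
      volume a b := by
    intro p
    apply Continuous.intervalIntegrable
    have hc : Continuous (fun θ => iteratedDeriv d u θ p.2) :=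
      (continuous_apply p.2).comp (hu.continuous_iteratedDeriv d le_rfl)
    fun_prop
  have hsum : ∀ p : Fin d × Fin n, (A⁻¹ * Hb) (k, i) p * R p
      = ∫ θ in a..b, (A⁻¹ * Hb) (k, i) p * ((b - θ) ^ (d - 1 - (p.1 : ℕ))
          / (Nat.factorial (d - 1 - (p.1 : ℕ)) : ℝ) * iteratedDeriv d u θ p.2) := by
    intro p
    rw [hR]
    exact (intervalIntegral.integral_const_mul _ _).symm
  rw [Finset.sum_congr rfl (fun p _ => hsum p)]
  exact (intervalIntegral.integral_finset_sum (fun p _ => hcint p)).symm
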